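/- Let S ⊆ ℕ_0^d be a GNS with H(S) ≠ ∅ and let n ∈ S, n ≠ 0. Then the set of maximal elements of Ap(S,n) with respect to the componentwise order ≤ equals the set of maximal elements of C(S,n) with respect to ≤, and both equal {h + n : h is a maximal element of H(S) with respect to ≤}. -/

import Mathlib

open scoped BigOperators

/-- A generalized numerical semigroup: a submonoid of `ℕ^d` with finite complement. -/
def IsGNS {d : ℕ} (S : Set (Fin d → ℕ)) : Prop :=
  (0 : Fin d → ℕ) ∈ S ∧ (∀ x y : Fin d → ℕ, x ∈ S → y ∈ S → x + y ∈ S) ∧ Sᶜ.Finite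

/-- The genus: number of gaps. -/
noncomputable def genus {d : ℕ} (S : Set (Fin d → ℕ)) : ℕ := Sᶜ.ncard

/-- Pseudo-Frobenius elements. -/
def PF {d : ℕ} (S : Set (Fin d → ℕ)) : Set (Fin d → ℕ) :=
  {h | h ∉ S ∧ ∀ s ∈ S, s ≠ 0 → h + s ∈ S}

/-- The type: number of pseudo-Frobenius elements. -/
noncomputable def typ {d : ℕ} (S : Set (Fin d → ℕ)) : ℕ := (PF S).ncard

/-- Maximal elements of a set with respect to a relation. -/
def Maximals {α : Type*} (le : α → α → Prop) (X : Set α) : Set α :=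
  {x ∈ X | ∀ y ∈ X, le x y → x = y}

/-- `f` is the unique maximal element of the set of gaps w.r.t. the componentwise order. -/
def IsFrobenius {d : ℕ} (S : Set (Fin d → ℕ)) (f : Fin d → ℕ) : Prop :=
  Maximals (· ≤ ·) Sᶜ = {f}

/-- Almost symmetric: `2 g(S) + 1 - t(S) = ∏ (h i + 1)` for some gap `h`. -/
def AlmostSymmetric {d : ℕ} (S : Set (Fin d → ℕ)) : Prop :=
  ∃ h ∉ S, 2 * genus S + 1 = typ S + ∏ i, (h i + 1)

/-- Special gaps. -/
def SG {d : ℕ} (S : Set (Fin d → ℕ)) : Set (Fin d → ℕ) :=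
  {h ∈ PF S | h + h ∈ S}

/-- The partial order `≤_S` : `y ≤_S x` iff `x - y ∈ S`. -/
def leS {d : ℕ} (S : Set (Fin d → ℕ)) (x y : Fin d → ℕ) : Prop :=
  ∃ s ∈ S, x + s = y

/-- The Apéry set of `S` with respect to `n`. -/
def Ap {d : ℕ} (S : Set (Fin d → ℕ)) (n : Fin d → ℕ) : Set (Fin d → ℕ) :=
  {s ∈ S | ¬ ∃ u ∈ S, u + n = s}

/-- The reduced Apéry set of `S` with respect to `n`. -/
def Cred {d : ℕ} (S : Set (Fin d → ℕ)) (n : Fin d → ℕ) : Set (Fin d → ℕ) :=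
  {s ∈ Ap S n | ∃ h, h ∉ S ∧ s ≤ h + n}

/-- A monomial order on `ℕ^d` given by its strict-order relation. -/
def IsMonomialOrder (d : ℕ) (lt : (Fin d → ℕ) → (Fin d → ℕ) → Prop) : Prop :=
  (∀ a, ¬ lt a a) ∧ (∀ a b c, lt a b → lt b c → lt a c) ∧
  (∀ a b, a ≠ b → lt a b ∨ lt b a) ∧
  (∀ u a b, lt a b → lt (a + u) (b + u)) ∧
  (∀ a, a ≠ (0 : Fin d → ℕ) → lt 0 a)

/-- Minimal generator of a GNS. -/
def IsMinGen {d : ℕ} (S : Set (Fin d → ℕ)) (x : Fin d → ℕ) : Prop :=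
  x ∈ S ∧ x ≠ 0 ∧ ∀ y ∈ S, ∀ z ∈ S, y ≠ 0 → z ≠ 0 → y + z ≠ x

/-- Irreducible GNS: not an intersection of two GNSs properly containing it. -/
def GNSIrreducible {d : ℕ} (S : Set (Fin d → ℕ)) : Prop :=
  ¬ ∃ S₁ S₂ : Set (Fin d → ℕ), IsGNS S₁ ∧ IsGNS S₂ ∧ S ⊂ S₁ ∧ S ⊂ S₂ ∧ S = S₁ ∩ S₂

/-- Pseudo-symmetric: `PF S = {f, f/2}`. -/
def PseudoSymmetric {d : ℕ} (S : Set (Fin d → ℕ)) : Prop :=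
  ∃ f q : Fin d → ℕ, f ≠ q ∧ q + q = f ∧ PF S = {f, q}

section AuxS10
variable {d : ℕ} {S : Set (Fin d → ℕ)} {n : Fin d → ℕ}

lemma aux_le_add (h n : Fin d → ℕ) : h ≤ h + n := fun i => Nat.le_add_right _ _

lemma aux_mem_Ap (hn0 : n ≠ 0) {h : Fin d → ℕ}
    (hh : h ∈ Maximals (· ≤ ·) Sᶜ) : h + n ∈ Ap S n := by
  obtain ⟨hhS, hmax⟩ := hh
  have hmem : h + n ∈ S := by
    by_contra hc
    have he := hmax _ hc (aux_le_add h n)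
    apply hn0; funext i
    have := congrFun he i
    simp only [Pi.add_apply] at this
    simpa using by omega
  refine ⟨hmem, ?_⟩
  rintro ⟨u, hu, he⟩
  have : u = h := by
    funext i
    have := congrFun he i
    simp only [Pi.add_apply] at this
    omega
  exact hhS (this ▸ hu)

lemma aux_maximal_Ap (hn0 : n ≠ 0) {h : Fin d → ℕ} (hh : h ∈ Maximals (· ≤ ·) Sᶜ) :
    h + n ∈ Maximals (· ≤ ·) (Ap S n) := by
  refine ⟨aux_mem_Ap hn0 hh, ?_⟩
  intro y hy hle
  by_contra hne
  set t : Fin d → ℕ := fun i => y i - (h i + n i) with ht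
  have hyt : (h + t) + n = y := by
    funext i
    have := hle i
    simp only [Pi.add_apply] at this ⊢
    simp only [t]
    omega
  have ht0 : t ≠ 0 := by
    intro h0
    apply hne
    funext i
    have h1 := congrFun hyt i
    have h2 := congrFun h0 i
    simp only [Pi.add_apply, Pi.zero_apply] at h1 h2 ⊢
    omega
  have hht : h + t ∈ S := by
    by_contra hc
    have he := hh.2 _ hc (aux_le_add h t)
    apply ht0
    funext i
    have := congrFun he i
    simp only [Pi.add_apply, Pi.zero_apply] at this ⊢
    omega
  exact hy.2 ⟨h + t, hht, hyt⟩

lemma aux_exists_max_gap (hfin : Sᶜ.Finite) {g : Fin d → ℕ} (hg : g ∉ S) :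
    ∃ h ∈ Maximals (· ≤ ·) Sᶜ, g ≤ h := by
  have hsub : {y ∈ Sᶜ | g ≤ y}.Finite := hfin.subset (fun y hy => hy.1)
  obtain ⟨a, ha, hmax⟩ := hsub.exists_maximalFor id _ ⟨g, hg, le_refl g⟩
  exact ⟨a, ⟨ha.1, fun y hy hle => le_antisymm hle (hmax ⟨hy, ha.2.trans hle⟩ hle)⟩, ha.2⟩

lemma aux_max_Ap_subset (hS : IsGNS S) (hH : Sᶜ.Nonempty) (hn0 : n ≠ 0)
    {x : Fin d → ℕ} (hx : x ∈ Maximals (· ≤ ·) (Ap S n)) :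
    ∃ h ∈ Maximals (· ≤ ·) Sᶜ, x = h + n := by
  obtain ⟨⟨hxS, hxAp⟩, hxmax⟩ := hx
  by_cases hge : n ≤ x
  · have hun : (fun i => x i - n i : Fin d → ℕ) + n = x := by
      funext i
      have h1 : n i ≤ x i := hge i
      show x i - n i + n i = x i
      omega
    have huS : (fun i => x i - n i : Fin d → ℕ) ∉ S := fun h => hxAp ⟨_, h, hun⟩
    obtain ⟨h, hh, hle⟩ := aux_exists_max_gap hS.2.2 huS
    have hxle : x ≤ h + n := by
      intro i
      have h1 : x i - n i ≤ h i := hle i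
      have h2 : n i ≤ x i := hge i
      show x i ≤ h i + n i
      omega
    exact ⟨h, hh, hxmax _ (aux_mem_Ap hn0 hh) hxle⟩
  · exfalso
    rw [Pi.le_def] at hge
    push_neg at hge
    obtain ⟨i, hi⟩ := hge
    -- get a maximal gap
    obtain ⟨g, hg⟩ := hH
    obtain ⟨h, hh, -⟩ := aux_exists_max_gap hS.2.2 hg
    by_cases hxh : x ≤ h + n
    · have hx_eq : x = h + n := hxmax _ (aux_mem_Ap hn0 hh) hxh
      have := congrFun hx_eq i
      simp only [Pi.add_apply] at this
      omega
    · rw [Pi.le_def] at hxh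
      push_neg at hxh
      obtain ⟨j, hj⟩ := hxh
      have hij : j ≠ i := by
        intro e; subst e
        simp only [Pi.add_apply] at hj
        omega
      -- bound the j-th coordinates of gaps
      obtain ⟨b, hb⟩ := (hS.2.2.image (fun v => v j)).bddAbove
      set y : Fin d → ℕ := x + Pi.single j (b + 1) with hy
      have hyj : y j = x j + (b + 1) := by
        simp [hy]
      have hyne : ∀ k, k ≠ j → y k = x k := by
        intro k hk
        simp [hy, Pi.single_eq_of_ne hk]
      clear_value y
      have hyS : y ∈ S := by
        by_contra hc
        have hyb : y j ≤ b := hb ⟨y, hc, rfl⟩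
        omega
      have hyAp : y ∈ Ap S n := by
        refine ⟨hyS, ?_⟩
        rintro ⟨u, hu, he⟩
        have h1 := congrFun he i
        have h2 := hyne i (Ne.symm hij)
        simp only [Pi.add_apply] at h1
        omega
      have hle : x ≤ y := by
        intro k
        by_cases hk : k = j
        · rw [hk, hyj]; exact Nat.le_add_right _ _
        · rw [hyne k hk]
      have := congrFun (hxmax _ hyAp hle) j
      omega

end AuxS10

/-- `Maximals_≤ Ap(S,n) = Maximals_≤ C(S,n) = {h + n : h ∈ Maximals_≤ H(S)}`. -/
theorem statement10 (d : ℕ) (hd : 0 < d) (S : Set (Fin d → ℕ)) (hS : IsGNS S)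
    (hH : Sᶜ.Nonempty) (n : Fin d → ℕ) (hn : n ∈ S) (hn0 : n ≠ 0) :
    Maximals (· ≤ ·) (Ap S n) = Maximals (· ≤ ·) (Cred S n) ∧
    Maximals (· ≤ ·) (Ap S n) = (· + n) '' Maximals (· ≤ ·) Sᶜ := by
  have hAp : Maximals (· ≤ ·) (Ap S n) = (· + n) '' Maximals (· ≤ ·) Sᶜ := by
    ext x
    constructor
    · intro hx
      obtain ⟨h, hh, rfl⟩ := aux_max_Ap_subset hS hH hn0 hx
      exact ⟨h, hh, rfl⟩
    · rintro ⟨h, hh, rfl⟩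
      exact aux_maximal_Ap hn0 hh
  refine ⟨?_, hAp⟩
  ext x
  constructor
  · intro hx
    obtain ⟨h, hh, rfl⟩ := aux_max_Ap_subset hS hH hn0 hx
    refine ⟨⟨aux_mem_Ap hn0 hh, h, hh.1, le_refl _⟩, ?_⟩
    intro y hy hle
    exact (aux_maximal_Ap hn0 hh).2 y hy.1 hle
  · intro hx
    obtain ⟨⟨hxAp, g, hgS, hgle⟩, hxmax⟩ := hx
    obtain ⟨h, hh, hle⟩ := aux_exists_max_gap hS.2.2 hgS
    have hxle : x ≤ h + n := le_trans hgle (add_le_add_left hle n)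
    have hx_eq : x = h + n := hxmax _ ⟨aux_mem_Ap hn0 hh, h, hh.1, le_refl _⟩ hxle
    rw [hx_eq]
    exact aux_maximal_Ap hn0 hh
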